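/- Let N ≥ 1, Θ = (θ_1,…,θ_N) ∈ (0,∞)^N, and let X = (X_t)_{t∈ℤ^N} be a random field satisfying: (a) there exists G ∈ 𝒢_Θ with X_t = ⟨Θ̂, X̂⁻_t⟩ + Δ_t G for every t; and (b) for every j ∈ {1,…,N} and all fixed t_1,…,t_{j−1},t_{j+1},…,t_N ∈ ℤ, e^{m θ_j} X_{t_1,…,t_{j−1},m,t_{j+1},…,t_N} → 0 in probability as m → −∞. Then for every t ∈ ℤ^N the random variable X_t admits the moving-average representation X_t = e^{−Σ_{l=1}^N t_l θ_l} · lim_{M_1→∞}⋯lim_{M_N→∞} Σ_{j_1=−M_1}^{t_1}⋯Σ_{j_N=−M_N}^{t_N} e^{Σ_{l=1}^N j_l θ_l} Δ_{(j_1,…,j_N)} G, where the iterated limit is taken in probability. -/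

import Mathlib

open MeasureTheory Filter

noncomputable section

/-- Two families of real random variables indexed by `ℤ^N` have the same
finite-dimensional distributions. -/
def HasSameFDD {Ω : Type*} [MeasurableSpace Ω] {N : ℕ} (μ : Measure Ω)
    (X Y : (Fin N → ℤ) → Ω → ℝ) : Prop :=
  ∀ (n : ℕ) (t : Fin n → (Fin N → ℤ)),
    μ.map (fun ω i => X (t i) ω) = μ.map (fun ω i => Y (t i) ω)

/-- A random field on `ℤ^N` is stationary if every shift leaves the
finite-dimensional distributions unchanged. -/
def IsStationaryRF {Ω : Type*} [MeasurableSpace Ω] {N : ℕ} (μ : Measure Ω)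
    (X : (Fin N → ℤ) → Ω → ℝ) : Prop :=
  ∀ s : Fin N → ℤ, HasSameFDD μ (fun t => X (t + s)) X

/-- A random field `Y` on `ℤ^N` is `Θ`-self-similar if `(Y_{t+s})_t` equals
`(e^{⟨s,Θ⟩} Y_t)_t` in finite-dimensional distributions for every `s`. -/
def IsSelfSimilar {Ω : Type*} [MeasurableSpace Ω] {N : ℕ} (μ : Measure Ω)
    (Θ : Fin N → ℝ) (Y : (Fin N → ℤ) → Ω → ℝ) : Prop :=
  ∀ s : Fin N → ℤ, HasSameFDD μ (fun t => Y (t + s))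
    (fun t ω => Real.exp (∑ l, (s l : ℝ) * Θ l) * Y t ω)

/-- The square increment `Δ_t X = Σ_{i ∈ {0,1}^N} (−1)^{Σ_l i_l} X_{t−i}`. -/
def sqInc {N : ℕ} (X : (Fin N → ℤ) → ℝ) (t : Fin N → ℤ) : ℝ :=
  ∑ i : Fin N → Bool,
    (-1 : ℝ) ^ ((∑ l, if i l then 1 else 0 : ℕ)) *
      X (fun l => t l - if i l then 1 else 0)

/-- A field has stationary (rectangular) increments if its square-increment
field is stationary. -/
def HasStationaryIncrements {Ω : Type*} [MeasurableSpace Ω] {N : ℕ} (μ : Measure Ω)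
    (G : (Fin N → ℤ) → Ω → ℝ) : Prop :=
  IsStationaryRF μ (fun t ω => sqInc (fun u => G u ω) t)

/-- The inner product `⟨Θ̂, X̂⁻_t⟩ = Σ_{i ∈ {0,1}^N, i ≠ 0} (−1)^{1+Σ_l i_l}
e^{−⟨i,Θ⟩} X_{t−i}`. -/
def prevInner {N : ℕ} (Θ : Fin N → ℝ) (X : (Fin N → ℤ) → ℝ) (t : Fin N → ℤ) : ℝ :=
  ∑ i ∈ Finset.univ.filter (fun i : Fin N → Bool => i ≠ fun _ => false),
    (-1 : ℝ) ^ ((1 + ∑ l, if i l then 1 else 0 : ℕ)) *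
      (Real.exp (-∑ l, (if i l then (1 : ℝ) else 0) * Θ l) *
        X (fun l => t l - if i l then 1 else 0))

/-- Iterated limit in probability `lim_{M₁→∞} ⋯ lim_{M_k→∞} F(M₁,…,M_k) = Z`:
the innermost limit is over the last variable, the outermost over the first. -/
def IterLimInProb {Ω : Type*} [MeasurableSpace Ω] (μ : Measure Ω) :
    (k : ℕ) → ((Fin k → ℕ) → Ω → ℝ) → (Ω → ℝ) → Prop
  | 0, F, Z => ∀ ω, F (fun i => i.elim0) ω = Z ω
  | k + 1, F, Z => ∃ H : ℕ → Ω → ℝ,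
      (∀ M₁ : ℕ, IterLimInProb μ k (fun M => F (Fin.cons M₁ M)) (H M₁)) ∧
      TendstoInMeasure μ H atTop Z

/-- The class `𝒢_Θ`: stationary increment fields `G` vanishing on
`Σ_l t_l ∈ {0,−1,…,−N+1}` such that the iterated limit (in probability)
`lim_{M₁→∞}⋯lim_{M_N→∞} Σ_{j₁=−M₁}^{t₁}⋯Σ_{j_N=−M_N}^{t_N} e^{⟨j,Θ⟩} Δ_j G`
exists as an (almost surely finite, real-valued) random variable for every `t`. -/
def MemClassG {Ω : Type*} [MeasurableSpace Ω] {N : ℕ} (μ : Measure Ω)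
    (Θ : Fin N → ℝ) (G : (Fin N → ℤ) → Ω → ℝ) : Prop :=
  HasStationaryIncrements μ G ∧
  (∀ t : Fin N → ℤ, -(N : ℤ) + 1 ≤ ∑ l, t l → (∑ l, t l) ≤ 0 → ∀ ω, G t ω = 0) ∧
  (∀ t : Fin N → ℤ, ∃ Z : Ω → ℝ,
    IterLimInProb μ N (fun M ω =>
      ∑ j ∈ Finset.Icc (fun l => -(M l : ℤ)) t,
        Real.exp (∑ l, (j l : ℝ) * Θ l) * sqInc (fun u => G u ω) j) Z)

/-- The iterated (chained) sum
`Σ_{k₁ = c − t₂ − … − t_N}^{t₁} Σ_{k₂ = c − k₁ − t₃ − … − t_N}^{t₂} ⋯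
 Σ_{k_N = c − k₁ − … − k_{N−1}}^{t_N} f(k)`, with empty ranges contributing `0`. -/
def iterSumPos : (n : ℕ) → ℤ → (Fin n → ℤ) → ((Fin n → ℤ) → ℝ) → ℝ
  | 0, _, _, f => f (fun i => i.elim0)
  | n + 1, c, t, f =>
      ∑ k ∈ Finset.Icc (c - ∑ l : Fin n, t l.succ) (t 0),
        iterSumPos n (c - k) (fun l => t l.succ) (fun j => f (Fin.cons k j))

/-- The iterated (chained) sum
`Σ_{k₁ = t₁+1}^{c − t₂ − … − t_N − N + 1} Σ_{k₂ = t₂+1}^{c − k₁ − t₃ − … − t_N − N + 2} ⋯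
 Σ_{k_N = t_N+1}^{c − k₁ − … − k_{N−1}} f(k)`, with empty ranges contributing `0`. -/
def iterSumNeg : (n : ℕ) → ℤ → (Fin n → ℤ) → ((Fin n → ℤ) → ℝ) → ℝ
  | 0, _, _, f => f (fun i => i.elim0)
  | n + 1, c, t, f =>
      ∑ k ∈ Finset.Icc (t 0 + 1) (c - (∑ l : Fin n, t l.succ) - (n : ℤ)),
        iterSumNeg n (c - k) (fun l => t l.succ) (fun j => f (Fin.cons k j))

/-- The field `G` built from a (deterministic realisation of a) field `Y`:
for `Σ_l t_l ≥ 1` it is the chained sum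
`Σ_{k₁ = 1−t₂−…−t_N}^{t₁} ⋯ Σ_{k_N = 1−k₁−…−k_{N−1}}^{t_N} e^{−⟨k,Θ⟩} Δ_k Y`,
and for `Σ_l t_l ≤ 0` it is
`(−1)^N Σ_{k₁ = t₁+1}^{−t₂−…−t_N−N+1} ⋯ Σ_{k_N = t_N+1}^{−k₁−…−k_{N−1}} e^{−⟨k,Θ⟩} Δ_k Y`. -/
def lampertiG {N : ℕ} (Θ : Fin N → ℝ) (Y : (Fin N → ℤ) → ℝ) (t : Fin N → ℤ) : ℝ :=
  if 1 ≤ ∑ l, t l then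
    iterSumPos N 1 t (fun k => Real.exp (-∑ l, (k l : ℝ) * Θ l) * sqInc Y k)
  else
    (-1 : ℝ) ^ N *
      iterSumNeg N 0 t (fun k => Real.exp (-∑ l, (k l : ℝ) * Θ l) * sqInc Y k)

open Topology
section AUX


section tim
variable {Ω : Type*} [MeasurableSpace Ω] {μ : Measure Ω} {ι ι' : Type*}

lemma tim_const (l : Filter ι) (Z : Ω → ℝ) : TendstoInMeasure μ (fun _ : ι => Z) l Z := by
  rw [tendstoInMeasure_iff_dist]
  intro ε hε
  have h : (fun _ : ι => μ { x | ε ≤ dist (Z x) (Z x) }) = fun _ => 0 := by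
    funext n
    have h0 : { x : Ω | ε ≤ dist (Z x) (Z x) } = ∅ := by
      ext x; simp [dist_self, not_le.mpr hε]
    rw [h0]; exact measure_empty
  rw [h]; exact tendsto_const_nhds

lemma tim_add {l : Filter ι} {f g : ι → Ω → ℝ} {F G : Ω → ℝ}
    (hf : TendstoInMeasure μ f l F) (hg : TendstoInMeasure μ g l G) :
    TendstoInMeasure μ (fun n x => f n x + g n x) l (fun x => F x + G x) := by
  rw [tendstoInMeasure_iff_dist] at hf hg ⊢
  intro ε hε
  have h2 : (0:ℝ) < ε / 2 := by positivity
  have key : ∀ n, μ { x | ε ≤ dist (f n x + g n x) (F x + G x) }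
      ≤ μ { x | ε / 2 ≤ dist (f n x) (F x) } + μ { x | ε / 2 ≤ dist (g n x) (G x) } := by
    intro n
    refine le_trans (measure_mono ?_) (measure_union_le _ _)
    intro x hx
    by_contra hne
    simp only [Set.mem_union, Set.mem_setOf_eq, not_or, not_le] at hne
    have hd : dist (f n x + g n x) (F x + G x) ≤ dist (f n x) (F x) + dist (g n x) (G x) :=
      dist_add_add_le _ _ _ _
    have : ε ≤ dist (f n x + g n x) (F x + G x) := hx
    linarith [hne.1, hne.2]
  have hsum : Tendsto (fun n => μ { x | ε / 2 ≤ dist (f n x) (F x) }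
      + μ { x | ε / 2 ≤ dist (g n x) (G x) }) l (𝓝 0) := by
    simpa using (hf _ h2).add (hg _ h2)
  exact tendsto_of_tendsto_of_tendsto_of_le_of_le tendsto_const_nhds hsum
    (fun n => zero_le) key

lemma tim_comp {l : Filter ι} {l' : Filter ι'} {f : ι → Ω → ℝ} {g : Ω → ℝ}
    (h : TendstoInMeasure μ f l g) {u : ι' → ι} (hu : Tendsto u l' l) :
    TendstoInMeasure μ (fun n => f (u n)) l' g :=
  fun ε hε => (h ε hε).comp hu

lemma tim_const_mul {l : Filter ι} {f : ι → Ω → ℝ} {g : Ω → ℝ} (c : ℝ)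
    (h : TendstoInMeasure μ f l g) :
    TendstoInMeasure μ (fun n x => c * f n x) l (fun x => c * g x) := by
  rcases eq_or_ne c 0 with rfl | hc
  · simpa using tim_const l (fun x : Ω => (0:ℝ))
  · rw [tendstoInMeasure_iff_dist] at h ⊢
    intro ε hε
    have hcp : (0:ℝ) < |c| := abs_pos.mpr hc
    have hset : ∀ n, { x | ε ≤ dist (c * f n x) (c * g x) }
        = { x | ε / |c| ≤ dist (f n x) (g x) } := by
      intro n; ext x
      simp only [Set.mem_setOf_eq, Real.dist_eq, ← mul_sub, abs_mul]
      rw [div_le_iff₀ hcp, mul_comm]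
    have := h (ε / |c|) (by positivity)
    have heq : (fun n => μ { x | ε ≤ dist (c * f n x) (c * g x) })
        = fun n => μ { x | ε / |c| ≤ dist (f n x) (g x) } := funext fun n => by rw [hset n]
    rw [heq]; exact this

lemma tim_congr_ev {f f' : ℕ → Ω → ℝ} {g : Ω → ℝ}
    (h : ∀ᶠ n in atTop, f n = f' n) (hf : TendstoInMeasure μ f atTop g) :
    TendstoInMeasure μ f' atTop g := by
  intro ε hε
  refine (hf ε hε).congr' ?_
  filter_upwards [h] with n hn
  rw [hn]

lemma tim_congr_fun {l : Filter ι} {f f' : ι → Ω → ℝ} {g : Ω → ℝ}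
    (h : ∀ n x, f n x = f' n x) (hf : TendstoInMeasure μ f l g) :
    TendstoInMeasure μ f' l g := by
  have he : f = f' := funext fun n => funext (h n)
  rwa [he] at hf

end tim
section iter
variable {Ω : Type*} [MeasurableSpace Ω] {μ : MeasureTheory.Measure Ω}

lemma iter_congr {k : ℕ} {F F' : (Fin k → ℕ) → Ω → ℝ} {Z Z' : Ω → ℝ}
    (hF : ∀ M ω, F M ω = F' M ω) (hZ : ∀ ω, Z ω = Z' ω)
    (h : IterLimInProb μ k F Z) : IterLimInProb μ k F' Z' := by
  have h1 : F = F' := funext fun M => funext fun ω => hF M ω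
  have h2 : Z = Z' := funext hZ
  rwa [h1, h2] at h

lemma iter_const : ∀ (k : ℕ) (Z : Ω → ℝ), IterLimInProb μ k (fun _ => Z) Z
  | 0, Z => fun _ => rfl
  | k + 1, Z => ⟨fun _ => Z, fun _ => iter_const k Z, tim_const _ Z⟩

lemma iter_add : ∀ (k : ℕ) {F F' : (Fin k → ℕ) → Ω → ℝ} {Z Z' : Ω → ℝ},
    IterLimInProb μ k F Z → IterLimInProb μ k F' Z' →
    IterLimInProb μ k (fun M ω => F M ω + F' M ω) (fun ω => Z ω + Z' ω)
  | 0, F, F', Z, Z', h, h' => fun ω => by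
      simp only [IterLimInProb] at h h' ⊢
      rw [h ω, h' ω]
  | k + 1, F, F', Z, Z', h, h' => by
      obtain ⟨H, hH, hHt⟩ := h
      obtain ⟨H', hH', hH't⟩ := h'
      exact ⟨fun m ω => H m ω + H' m ω,
        fun m => iter_add k (hH m) (hH' m), tim_add hHt hH't⟩

lemma iter_sum {k : ℕ} {ι : Type*} (s : Finset ι)
    (T : ι → (Fin k → ℕ) → Ω → ℝ) (Z : ι → Ω → ℝ)
    (h : ∀ i ∈ s, IterLimInProb μ k (T i) (Z i)) :
    IterLimInProb μ k (fun M ω => ∑ i ∈ s, T i M ω) (fun ω => ∑ i ∈ s, Z i ω) := by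
  induction s using Finset.cons_induction with
  | empty =>
      refine iter_congr (fun M ω => ?_) (fun ω => ?_) (iter_const k (fun _ => (0:ℝ))) <;> simp
  | cons a s ha ih =>
      refine iter_congr (fun M ω => ?_) (fun ω => ?_)
        (iter_add k (h a (Finset.mem_cons_self a s))
          (ih fun i hi => h i (Finset.mem_cons_of_mem hi))) <;>
      simp [Finset.sum_cons]

end iter
section iter2
variable {Ω : Type*} [MeasurableSpace Ω] {μ : MeasureTheory.Measure Ω}

open Filter MeasureTheory

lemma iter_guard : ∀ (k : ℕ) (t : Fin k → ℤ) {F : (Fin k → ℕ) → Ω → ℝ} {Z : Ω → ℝ},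
    IterLimInProb μ k F Z →
    IterLimInProb μ k (fun M ω => if ∀ l, -(M l : ℤ) ≤ t l then F M ω else 0) Z
  | 0, t, F, Z, h => fun ω => by
      simp only [IterLimInProb] at h
      beta_reduce
      rw [if_pos (fun l => l.elim0)]
      exact h ω
  | k + 1, t, F, Z, h => by
      obtain ⟨H, hH, hHt⟩ := h
      refine ⟨fun M₁ ω => if -(M₁ : ℤ) ≤ t 0 then H M₁ ω else 0, fun M₁ => ?_, ?_⟩
      · by_cases h1 : -(M₁ : ℤ) ≤ t 0
        · refine iter_congr (fun M ω => ?_) (fun ω => by beta_reduce; rw [if_pos h1])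
            (iter_guard k (fun l => t l.succ) (hH M₁))
          beta_reduce
          by_cases h2 : ∀ l : Fin k, -(M l : ℤ) ≤ t l.succ
          · rw [if_pos h2, if_pos]
            intro l
            refine Fin.cases ?_ ?_ l
            · simpa using h1
            · intro l'; simpa using h2 l'
          · rw [if_neg h2, if_neg]
            intro hall
            exact h2 fun l => by simpa using hall l.succ
        · refine iter_congr (fun M ω => ?_) (fun ω => by beta_reduce; rw [if_neg h1])
            (iter_const k (fun _ => (0:ℝ)))
          beta_reduce
          rw [if_neg]
          intro hall
          exact h1 (by simpa using hall 0)
      · refine tim_congr_ev ?_ hHt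
        filter_upwards [eventually_ge_atTop (t 0).natAbs] with M₁ hM₁
        have h1 : -(M₁ : ℤ) ≤ t 0 := by omega
        funext ω
        beta_reduce
        rw [if_pos h1]

end iter2
section iter3
variable {Ω : Type*} [MeasurableSpace Ω] {μ : MeasureTheory.Measure Ω}

open Filter MeasureTheory

lemma cons_update_zero (a m : ℕ) {k : ℕ} (z : Fin k → ℕ) :
    Function.update (Fin.cons a z : Fin (k+1) → ℕ) (0 : Fin (k+1)) m
      = (Fin.cons m z : Fin (k+1) → ℕ) := by
  funext l
  refine Fin.cases ?_ ?_ l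
  · simp
  · intro l'
    rw [Function.update_of_ne (Fin.succ_ne_zero l')]
    simp

lemma cons_update_succ (a m : ℕ) {k : ℕ} (z : Fin k → ℕ) (j : Fin k) :
    (Fin.cons a (Function.update z j m) : Fin (k+1) → ℕ)
      = Function.update (Fin.cons a z : Fin (k+1) → ℕ) j.succ m := by
  funext l
  refine Fin.cases ?_ ?_ l
  · rw [Function.update_of_ne (Fin.succ_ne_zero j).symm]
    simp
  · intro l'
    by_cases h : l' = j
    · subst h; simp
    · rw [Function.update_of_ne (fun hc => h (Fin.succ_injective _ hc))]
      simp [Function.update_of_ne h]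

lemma iter_term : ∀ (k : ℕ) (W : (Fin k → ℕ) → Ω → ℝ) (j : Fin k),
    (∀ M M' : Fin k → ℕ, (∀ l, l ≤ j → M l = M' l) → W M = W M') →
    (∀ M : Fin k → ℕ,
      TendstoInMeasure μ (fun m : ℕ => W (Function.update M j m)) atTop (fun _ => 0)) →
    IterLimInProb μ k W (fun _ => 0)
  | 0, W, j, _, _ => j.elim0
  | k + 1, W, j, h1, h2 => by
      rcases Fin.eq_zero_or_eq_succ j with rfl | ⟨j', rfl⟩
      · -- j = 0
        refine ⟨fun m => W (Fin.cons m (fun _ => 0)), fun M₁ => ?_, ?_⟩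
        · have heq : (fun M => W (Fin.cons M₁ M)) = fun _ => W (Fin.cons M₁ (fun _ => 0)) := by
            funext M
            refine h1 _ _ (fun l hl => ?_)
            rcases Fin.eq_zero_or_eq_succ l with rfl | ⟨l', rfl⟩
            · simp
            · exact absurd (Fin.le_zero_iff.mp hl) (Fin.succ_ne_zero l')
          rw [heq]
          exact iter_const k _
        · have heq : (fun m : ℕ => W (Fin.cons m (fun _ => 0)))
              = fun m : ℕ => W (Function.update (Fin.cons 0 (fun _ => 0)) 0 m) := by
            funext m
            rw [cons_update_zero]
          rw [heq]
          exact h2 _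
      · -- j = j'.succ
        refine ⟨fun _ _ => 0, fun M₁ => ?_, tim_const _ _⟩
        refine iter_term k (fun M => W (Fin.cons M₁ M)) j' ?_ ?_
        · intro M M'' hMM
          refine h1 _ _ (fun l hl => ?_)
          rcases Fin.eq_zero_or_eq_succ l with rfl | ⟨l', rfl⟩
          · simp
          · simp only [Fin.cons_succ]
            exact hMM l' (by simpa [Fin.succ_le_succ_iff] using hl)
        · intro M
          have heq : (fun m : ℕ => W (Fin.cons M₁ (Function.update M j' m)))
              = fun m : ℕ => W (Function.update (Fin.cons M₁ M) j'.succ m) := by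
            funext m
            rw [cons_update_succ]
          rw [heq]
          exact h2 _

end iter3
section tele

lemma prod_ite_one {N : ℕ} (P : Fin N → Prop) [DecidablePred P] :
    (∏ l, if P l then (1:ℝ) else 0) = if ∀ l, P l then 1 else 0 := by
  by_cases h : ∀ l, P l
  · rw [if_pos h]
    exact Finset.prod_eq_one fun l _ => if_pos (h l)
  · rw [if_neg h]
    push_neg at h
    obtain ⟨l, hl⟩ := h
    exact Finset.prod_eq_zero (Finset.mem_univ l) (if_neg hl)

lemma sum_pi_bool {N : ℕ} (g : Fin N → Bool → ℝ) :
    ∑ i : Fin N → Bool, ∏ l, g l (i l) = ∏ l, (g l true + g l false) := by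
  calc ∑ i : Fin N → Bool, ∏ l, g l (i l)
      = ∑ i ∈ Fintype.piFinset (fun _ : Fin N => (Finset.univ : Finset Bool)),
          ∏ l, g l (i l) := by rw [Fintype.piFinset_univ]
    _ = ∏ l, ∑ b ∈ Finset.univ, g l b := (Finset.prod_univ_sum _ _).symm
    _ = ∏ l, (g l true + g l false) :=
        Finset.prod_congr rfl fun l _ => by rw [Fintype.sum_bool]

/-- the common coefficient -/
def coefTL {N : ℕ} (a t j : Fin N → ℤ) : ℝ :=
  ∏ l, ((if j l = t l then (1:ℝ) else 0) - (if j l = a l - 1 then 1 else 0))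

lemma telescope {N : ℕ} (f : (Fin N → ℤ) → ℝ) (a t : Fin N → ℤ) (hat : ∀ l, a l ≤ t l) :
    ∑ j ∈ Finset.Icc a t, sqInc f j
      = ∑ i : Fin N → Bool, (-1:ℝ) ^ ((∑ l, if i l then 1 else 0 : ℕ))
          * f (fun l => if i l then a l - 1 else t l) := by
  classical
  set B : Finset (Fin N → ℤ) := Finset.Icc (fun l => a l - 1) t with hB
  -- Claim 1 : LHS = ∑ j ∈ B, coefTL a t j * f j
  have claim1 : ∑ j ∈ Finset.Icc a t, sqInc f j = ∑ j ∈ B, coefTL a t j * f j := by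
    unfold sqInc
    rw [Finset.sum_comm]
    have hper : ∀ i : Fin N → Bool,
        ∑ j ∈ Finset.Icc a t,
            (-1:ℝ) ^ ((∑ l, if i l then 1 else 0 : ℕ)) * f (fun l => j l - if i l then 1 else 0)
        = ∑ j ∈ B, ((-1:ℝ) ^ ((∑ l, if i l then 1 else 0 : ℕ)) *
            (if ∀ l, a l - (if i l then 1 else 0) ≤ j l ∧ j l ≤ t l - (if i l then 1 else 0)
              then (1:ℝ) else 0)) * f j := by
      intro i
      rw [← Finset.mul_sum]
      have step1 : ∑ j ∈ Finset.Icc a t, f (fun l => j l - if i l then 1 else 0)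
          = ∑ j ∈ Finset.Icc (fun l => a l - if i l then 1 else 0)
              (fun l => t l - if i l then 1 else 0), f j := by
        refine Finset.sum_nbij' (fun j => fun l => j l - if i l then 1 else 0)
          (fun j => fun l => j l + if i l then 1 else 0) ?_ ?_ ?_ ?_ ?_
        · intro j hj
          rw [Finset.mem_Icc] at hj ⊢
          constructor <;> intro l
          · exact sub_le_sub_right (hj.1 l) _
          · exact sub_le_sub_right (hj.2 l) _
        · intro j hj
          rw [Finset.mem_Icc] at hj ⊢
          constructor <;> intro l
          · have := hj.1 l; dsimp at this ⊢; omega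
          · have := hj.2 l; dsimp at this ⊢; omega
        · intro j _; funext l; ring
        · intro j _; funext l; ring
        · intro j _; rfl
      have hsub : Finset.Icc (fun l => a l - if i l then 1 else 0)
          (fun l => t l - if i l then 1 else 0) ⊆ B := by
        intro j hj
        rw [Finset.mem_Icc] at hj ⊢
        constructor <;> intro l
        · have := hj.1 l; dsimp at this ⊢; split at this <;> omega
        · have := hj.2 l; dsimp at this ⊢; split at this <;> omega
      have step2 : ∑ j ∈ Finset.Icc (fun l => a l - if i l then 1 else 0)
              (fun l => t l - if i l then 1 else 0), f j
          = ∑ j ∈ B,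
            (if ∀ l, a l - (if i l then 1 else 0) ≤ j l ∧ j l ≤ t l - (if i l then 1 else 0)
              then (1:ℝ) else 0) * f j := by
        rw [← Finset.inter_eq_right.mpr hsub, ← Finset.sum_ite_mem]
        refine Finset.sum_congr rfl fun j _ => ?_
        have hiff : (j ∈ Finset.Icc (fun l => a l - if i l then 1 else 0)
              (fun l => t l - if i l then 1 else 0))
            ↔ (∀ l, a l - (if i l then 1 else 0) ≤ j l ∧ j l ≤ t l - (if i l then 1 else 0)) := by
          rw [Finset.mem_Icc]
          constructor
          · rintro ⟨h1, h2⟩ l; exact ⟨h1 l, h2 l⟩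
          · intro h; exact ⟨fun l => (h l).1, fun l => (h l).2⟩
        rw [ite_mul, one_mul, zero_mul]
        exact if_congr hiff rfl rfl
      rw [step1, step2, Finset.mul_sum]
      refine Finset.sum_congr rfl fun j _ => ?_
      ring
    rw [Finset.sum_congr rfl fun i _ => hper i, Finset.sum_comm]
    refine Finset.sum_congr rfl fun j hj => ?_
    rw [← Finset.sum_mul]
    congr 1
    -- inner coefficient identity
    rw [Finset.mem_Icc] at hj
    have hj1 : ∀ l, a l - 1 ≤ j l := fun l => hj.1 l
    have hj2 : ∀ l, j l ≤ t l := fun l => hj.2 l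
    have hg : ∀ i : Fin N → Bool,
        (-1:ℝ) ^ ((∑ l, if i l then 1 else 0 : ℕ)) *
            (if ∀ l, a l - (if i l then 1 else 0) ≤ j l ∧ j l ≤ t l - (if i l then 1 else 0)
              then (1:ℝ) else 0)
        = ∏ l, (((-1:ℝ) ^ (if i l then 1 else 0 : ℕ)) *
            (if a l - (if i l then 1 else 0) ≤ j l ∧ j l ≤ t l - (if i l then 1 else 0)
              then (1:ℝ) else 0)) := by
      intro i
      rw [Finset.prod_mul_distrib, Finset.prod_pow_eq_pow_sum,
        prod_ite_one (P := fun l => a l - (if i l then 1 else 0) ≤ j l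
          ∧ j l ≤ t l - (if i l then 1 else 0))]
    rw [Finset.sum_congr rfl fun i _ => hg i,
      sum_pi_bool (fun l b => ((-1:ℝ) ^ (if b then 1 else 0 : ℕ)) *
        (if a l - (if b then 1 else 0) ≤ j l ∧ j l ≤ t l - (if b then 1 else 0)
          then (1:ℝ) else 0))]
    unfold coefTL
    refine Finset.prod_congr rfl fun l _ => ?_
    have h1 := hat l
    have h2 := hj1 l
    have h3 := hj2 l
    norm_num
    split_ifs <;> first | (norm_num; omega) | norm_num | (exfalso; omega)
  -- Claim 2 : RHS = ∑ j ∈ B, coefTL a t j * f j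
  have claim2 : ∑ i : Fin N → Bool, (-1:ℝ) ^ ((∑ l, if i l then 1 else 0 : ℕ))
          * f (fun l => if i l then a l - 1 else t l)
      = ∑ j ∈ B, coefTL a t j * f j := by
    have hcorner : ∀ i : Fin N → Bool, (fun l => if i l then a l - 1 else t l) ∈ B := by
      intro i
      rw [Finset.mem_Icc]
      constructor <;> intro l <;> have := hat l <;> dsimp <;> split <;> omega
    have hper : ∀ i : Fin N → Bool,
        (-1:ℝ) ^ ((∑ l, if i l then 1 else 0 : ℕ)) * f (fun l => if i l then a l - 1 else t l)
        = ∑ j ∈ B, ((-1:ℝ) ^ ((∑ l, if i l then 1 else 0 : ℕ)) *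
            (if j = (fun l => if i l then a l - 1 else t l) then (1:ℝ) else 0)) * f j := by
      intro i
      have := Finset.sum_ite_eq' B (fun l => if i l then a l - 1 else t l) f
      rw [if_pos (hcorner i)] at this
      rw [← this, Finset.mul_sum]
      refine Finset.sum_congr rfl fun j _ => ?_
      by_cases hc : j = (fun l => if i l then a l - 1 else t l)
      · rw [if_pos hc, if_pos hc]; ring
      · rw [if_neg hc, if_neg hc]; ring
    rw [Finset.sum_congr rfl fun i _ => hper i, Finset.sum_comm]
    refine Finset.sum_congr rfl fun j hj => ?_
    rw [← Finset.sum_mul]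
    congr 1
    have hg : ∀ i : Fin N → Bool,
        (-1:ℝ) ^ ((∑ l, if i l then 1 else 0 : ℕ)) *
            (if j = (fun l => if i l then a l - 1 else t l) then (1:ℝ) else 0)
        = ∏ l, (((-1:ℝ) ^ (if i l then 1 else 0 : ℕ)) *
            (if j l = (if i l then a l - 1 else t l) then (1:ℝ) else 0)) := by
      intro i
      rw [Finset.prod_mul_distrib, Finset.prod_pow_eq_pow_sum,
        prod_ite_one (P := fun l => j l = (if i l then a l - 1 else t l))]
      congr 1
      exact if_congr funext_iff rfl rfl
    rw [Finset.sum_congr rfl fun i _ => hg i,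
      sum_pi_bool (fun l b => ((-1:ℝ) ^ (if b then 1 else 0 : ℕ)) *
        (if j l = (if b then a l - 1 else t l) then (1:ℝ) else 0))]
    unfold coefTL
    refine Finset.prod_congr rfl fun l _ => ?_
    norm_num
    split_ifs <;> ring
  rw [claim1, claim2]

end tele
section keyA

lemma keyA {N : ℕ} (Θ : Fin N → ℝ) (X G : (Fin N → ℤ) → ℝ)
    (hrep : ∀ t, X t = prevInner Θ X t + sqInc G t) (j : Fin N → ℤ) :
    Real.exp (∑ l, (j l : ℝ) * Θ l) * sqInc G j
      = sqInc (fun u => Real.exp (∑ l, (u l : ℝ) * Θ l) * X u) j := by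
  classical
  set E : ℝ := ∑ l, (j l : ℝ) * Θ l with hE
  have hsq : sqInc G j = X j - prevInner Θ X j := by
    have := hrep j; linarith
  rw [hsq]
  unfold prevInner
  rw [Finset.filter_ne']
  set c0 : Fin N → Bool := fun _ => false with hc0
  -- expand RHS
  unfold sqInc
  rw [← Finset.add_sum_erase _ _ (Finset.mem_univ c0)]
  have hterm0 : (-1 : ℝ) ^ ((∑ l, if c0 l then 1 else 0 : ℕ)) *
      ((fun u => Real.exp (∑ l, (u l : ℝ) * Θ l) * X u)
        (fun l => j l - if c0 l then 1 else 0)) = Real.exp E * X j := by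
    have h1 : (fun l => j l - if c0 l then 1 else 0) = j := by
      funext l; simp [hc0]
    rw [h1]
    norm_num [hc0]
    exact Or.inl hE.symm
  rw [hterm0, mul_sub, Finset.mul_sum]
  have hterm : ∀ i ∈ Finset.univ.erase c0,
      Real.exp E * ((-1 : ℝ) ^ ((1 + ∑ l, if i l then 1 else 0 : ℕ)) *
        (Real.exp (-∑ l, (if i l then (1 : ℝ) else 0) * Θ l) *
          X (fun l => j l - if i l then 1 else 0)))
      = -((-1 : ℝ) ^ ((∑ l, if i l then 1 else 0 : ℕ)) *
        ((fun u => Real.exp (∑ l, (u l : ℝ) * Θ l) * X u)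
          (fun l => j l - if i l then 1 else 0))) := by
    intro i _
    have hcast : ∑ l, (((fun l => j l - if i l then 1 else 0) l : ℤ) : ℝ) * Θ l
        = E - ∑ l, (if i l then (1 : ℝ) else 0) * Θ l := by
      rw [hE, ← Finset.sum_sub_distrib]
      refine Finset.sum_congr rfl fun l _ => ?_
      rw [← sub_mul]
      congr 1
      cases hil : i l with
      | false => simp [hil]
      | true => push_cast [hil]; ring
    beta_reduce
    rw [hcast, Real.exp_sub, pow_add]
    rw [Real.exp_neg]
    field_simp
  rw [Finset.sum_congr rfl hterm]
  have hneg : ∀ (s : Finset (Fin N → Bool)) (g : (Fin N → Bool) → ℝ),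
      ∑ x ∈ s, -(g x) = -∑ x ∈ s, g x := fun s g => by simp
  rw [hneg]
  ring

end keyA

end AUX

/-- moving-average representation: under the hypotheses of
Theorem gchar1, for every `t ∈ ℤ^N` the iterated limit in probability
`lim_{M₁→∞}⋯lim_{M_N→∞} Σ_{j₁=−M₁}^{t₁}⋯Σ_{j_N=−M_N}^{t_N} e^{⟨j,Θ⟩} Δ_j G`
equals `e^{⟨t,Θ⟩} X_t`, i.e. `X_t = e^{−Σ_l t_l θ_l} ·` that iterated limit. -/
theorem moving_average_representation {Ω : Type*} [MeasurableSpace Ω]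
    (μ : Measure Ω) [IsProbabilityMeasure μ] {N : ℕ} (hN : 1 ≤ N)
    (Θ : Fin N → ℝ) (hΘ : ∀ l, 0 < Θ l)
    (X : (Fin N → ℤ) → Ω → ℝ) (hmeas : ∀ t, Measurable (X t))
    (G : (Fin N → ℤ) → Ω → ℝ) (hG : MemClassG μ Θ G)
    (hrep : ∀ t ω, X t ω = prevInner Θ (fun u => X u ω) t + sqInc (fun u => G u ω) t)
    (hlim : ∀ (j : Fin N) (t : Fin N → ℤ),
      TendstoInMeasure μ
        (fun m : ℤ => fun ω => Real.exp ((m : ℝ) * Θ j) * X (Function.update t j m) ω)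
        atBot (fun _ => 0)) :
    ∀ t : Fin N → ℤ,
      IterLimInProb μ N
        (fun M ω =>
          ∑ j ∈ Finset.Icc (fun l => -(M l : ℤ)) t,
            Real.exp (∑ l, (j l : ℝ) * Θ l) * sqInc (fun u => G u ω) j)
        (fun ω => Real.exp (∑ l, (t l : ℝ) * Θ l) * X t ω) := by
  classical
  intro t
  -- Step 1: rewrite the partial sums via the key identity and telescoping
  have hkey : ∀ (ω : Ω) (j : Fin N → ℤ),
      Real.exp (∑ l, (j l : ℝ) * Θ l) * sqInc (fun u => G u ω) j
        = sqInc (fun u => Real.exp (∑ l, (u l : ℝ) * Θ l) * X u ω) j :=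
    fun ω j => keyA Θ (fun u => X u ω) (fun u => G u ω) (fun u => hrep u ω) j
  have hFun : (fun (M : Fin N → ℕ) (ω : Ω) =>
      ∑ j ∈ Finset.Icc (fun l => -(M l : ℤ)) t,
        Real.exp (∑ l, (j l : ℝ) * Θ l) * sqInc (fun u => G u ω) j)
    = fun M ω => if ∀ l, -(M l : ℤ) ≤ t l then
        (fun (M : Fin N → ℕ) (ω : Ω) =>
          ∑ i : Fin N → Bool, (-1:ℝ) ^ ((∑ l, if i l then 1 else 0 : ℕ))
            * (Real.exp (∑ l, (((fun l => if i l then -(M l : ℤ) - 1 else t l) l : ℤ) : ℝ) * Θ l)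
              * X (fun l => if i l then -(M l : ℤ) - 1 else t l) ω)) M ω
      else 0 := by
    funext M ω
    by_cases hc : ∀ l, -(M l : ℤ) ≤ t l
    · rw [if_pos hc]
      rw [Finset.sum_congr rfl fun j _ => hkey ω j]
      exact telescope (fun u => Real.exp (∑ l, (u l : ℝ) * Θ l) * X u ω)
        (fun l => -(M l : ℤ)) t hc
    · rw [if_neg hc]
      have hemp : Finset.Icc (fun l => -(M l : ℤ)) t = ∅ := by
        apply Finset.Icc_eq_empty
        intro hle
        exact hc fun l => hle l
      rw [hemp, Finset.sum_empty]
  rw [hFun]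
  refine iter_guard N t ?_
  -- Step 2: limit of the corner sum
  set c0 : Fin N → Bool := fun _ => false with hc0
  have hTZ : ∀ i ∈ (Finset.univ : Finset (Fin N → Bool)),
      IterLimInProb μ N
        (fun (M : Fin N → ℕ) (ω : Ω) =>
          (-1:ℝ) ^ ((∑ l, if i l then 1 else 0 : ℕ))
            * (Real.exp (∑ l, (((if i l then -(M l : ℤ) - 1 else t l) : ℤ) : ℝ) * Θ l)
              * X (fun l => if i l then -(M l : ℤ) - 1 else t l) ω))
        (fun ω => if i = c0 then Real.exp (∑ l, (t l : ℝ) * Θ l) * X t ω else 0) := by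
    intro i _
    by_cases hi : i = c0
    · refine iter_congr (fun M ω => ?_) (fun ω => by rw [if_pos hi])
        (iter_const N (fun ω => Real.exp (∑ l, (t l : ℝ) * Θ l) * X t ω))
      simp [hi, hc0]
    · -- i ≠ c0 : the term tends to zero
      refine iter_congr (fun M ω => rfl) (fun ω => by rw [if_neg hi]) ?_
      have hex : ∃ l, i l = true := by
        by_contra h
        push_neg at h
        exact hi (funext fun l => by simpa using h l)
      have hSne : (Finset.univ.filter (fun l => i l = true)).Nonempty := by
        obtain ⟨l, hl⟩ := hex
        exact ⟨l, by simp [hl]⟩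
      set j0 : Fin N := (Finset.univ.filter (fun l => i l = true)).max' hSne with hj0def
      have hj0 : i j0 = true := by
        have := (Finset.univ.filter (fun l => i l = true)).max'_mem hSne
        simpa using this
      have hmax : ∀ l, i l = true → l ≤ j0 :=
        fun l hl => (Finset.univ.filter (fun l => i l = true)).le_max' l (by simp [hl])
      refine iter_term N _ j0 ?_ ?_
      · intro M M' hMM'
        have hcn : (fun l => if i l then -(M l : ℤ) - 1 else t l)
            = (fun l => if i l then -(M' l : ℤ) - 1 else t l) := by
          funext l
          by_cases hl : i l = true
          · rw [hMM' l (hmax l hl)]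
          · simp [hl]
        have hsum_eq : ∑ l, (((if i l = true then -(M l : ℤ) - 1 else t l) : ℤ) : ℝ) * Θ l
            = ∑ l, (((if i l = true then -(M' l : ℤ) - 1 else t l) : ℤ) : ℝ) * Θ l :=
          Finset.sum_congr rfl fun l _ => by rw [congrFun hcn l]
        beta_reduce
        rw [hcn, hsum_eq]
      · intro M
        -- identify the sequence with a scaled, reindexed version of hlim
        have hupd : ∀ m : ℕ,
            (fun l => if i l then -((Function.update M j0 m) l : ℤ) - 1 else t l)
              = Function.update (fun l => if i l then -(M l : ℤ) - 1 else t l) j0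
                  (-(m : ℤ) - 1) := by
          intro m; funext l
          by_cases hl : l = j0
          · subst hl; simp [hj0]
          · rw [Function.update_of_ne hl, Function.update_of_ne hl]
        set u : Fin N → ℤ := fun l => if i l then -(M l : ℤ) - 1 else t l with hu
        have hsum : ∀ v : ℤ,
            ∑ l, ((Function.update u j0 v l : ℤ) : ℝ) * Θ l
              = (v : ℝ) * Θ j0 + ∑ l ∈ Finset.univ.erase j0, ((u l : ℤ) : ℝ) * Θ l := by
          intro v
          rw [← Finset.add_sum_erase _ _ (Finset.mem_univ j0)]
          congr 1
          · simp
          · refine Finset.sum_congr rfl fun l hl => ?_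
            rw [Function.update_of_ne (Finset.ne_of_mem_erase hl)]
        have hφ : Filter.Tendsto (fun m : ℕ => -(m : ℤ) - 1) Filter.atTop Filter.atBot := by
          have h1 : Filter.Tendsto (fun m : ℕ => (m : ℤ)) Filter.atTop Filter.atTop :=
            tendsto_natCast_atTop_atTop
          have h2 : Filter.Tendsto (fun m : ℕ => -(m : ℤ)) Filter.atTop Filter.atBot := by
            exact Filter.tendsto_neg_atBot_iff.mpr h1
          simpa [sub_eq_add_neg] using Filter.tendsto_atBot_add_const_right _ (-1 : ℤ) h2
        have hbase : TendstoInMeasure μ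
            (fun m : ℕ => fun ω =>
              Real.exp (((-(m : ℤ) - 1 : ℤ) : ℝ) * Θ j0)
                * X (Function.update u j0 (-(m : ℤ) - 1)) ω)
            Filter.atTop (fun _ => 0) :=
          tim_comp (hlim j0 u) hφ
        set C : ℝ := (-1:ℝ) ^ ((∑ l, if i l then 1 else 0 : ℕ))
            * Real.exp (∑ l ∈ Finset.univ.erase j0, ((u l : ℤ) : ℝ) * Θ l) with hC
        have hscaled := tim_const_mul C hbase
        have hz : (fun x : Ω => C * (fun _ : Ω => (0:ℝ)) x) = fun _ : Ω => (0:ℝ) := by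
          funext x; simp
        rw [hz] at hscaled
        refine tim_congr_fun (fun m ω => ?_) hscaled
        beta_reduce
        have h2 := hupd m
        have h3 : ∑ l, (((if i l then -((Function.update M j0 m) l : ℤ) - 1 else t l) : ℤ) : ℝ) * Θ l
            = ((-(m : ℤ) - 1 : ℤ) : ℝ) * Θ j0
              + ∑ l ∈ Finset.univ.erase j0, ((u l : ℤ) : ℝ) * Θ l := by
          rw [← hsum (-(m : ℤ) - 1)]
          refine Finset.sum_congr rfl fun l _ => ?_
          rw [congrFun h2 l]
        rw [h3, h2, hC, Real.exp_add]
        ring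
  have := iter_sum (μ := μ) Finset.univ _ _ hTZ
  refine iter_congr (fun M ω => rfl) (fun ω => ?_) this
  rw [Finset.sum_ite_eq' Finset.univ c0 (fun _ => Real.exp (∑ l, (t l : ℝ) * Θ l) * X t ω),
    if_pos (Finset.mem_univ c0)]
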